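/- Let F be the free join-semilattice on three generators x, y, z, realized as the set of nonempty subsets of {x,y,z} under union, with generators the singletons. Let E ⊆ F × F be the subsemilattice of F × F (under componentwise union) generated by the six pairs ({x},{x}), ({x},{y}), ({y},{y}), ({y},{z}), ({z},{z}), ({z},{x}). Then in the digraph (F, E) there is no symmetric path from {x} to {z}, i.e., no sequence {x} = a₀, a₁, …, a_m = {z} with (aᵢ, aᵢ₊₁) ∈ E and (aᵢ₊₁, aᵢ) ∈ E for all i. -/
import Mathlib


namespace DigraphHM14

/-- The free join-semilattice on the three generators `x = 0`, `y = 1`, `z = 2`,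
realized as the nonempty subsets of `{0,1,2}` under union. -/
def F3 : Type := { s : Finset (Fin 3) // s.Nonempty }

/-- The join (componentwise union is built from this) of `F3`. -/
def fjoin (a b : F3) : F3 :=
  ⟨a.1 ∪ b.1, a.2.mono (Finset.subset_union_left)⟩

/-- The generator `{x}`. -/
def genX : F3 := ⟨{0}, Finset.singleton_nonempty 0⟩

/-- The generator `{y}`. -/
def genY : F3 := ⟨{1}, Finset.singleton_nonempty 1⟩

/-- The generator `{z}`. -/
def genZ : F3 := ⟨{2}, Finset.singleton_nonempty 2⟩

/-- The subsemilattice `E` of `F3 × F3` (under componentwise union) generated by the six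
pairs `({x},{x})`, `({x},{y})`, `({y},{y})`, `({y},{z})`, `({z},{z})`, `({z},{x})`,
viewed as the edge relation of a digraph on `F3`. -/
inductive SemEdge : F3 → F3 → Prop
  | xx : SemEdge genX genX
  | xy : SemEdge genX genY
  | yy : SemEdge genY genY
  | yz : SemEdge genY genZ
  | zz : SemEdge genZ genZ
  | zx : SemEdge genZ genX
  | join {a b c d : F3} : SemEdge a b → SemEdge c d → SemEdge (fjoin a c) (fjoin b d)

/-- The explicit edge set of the generated subsemilattice, as a finite set of pairs. -/
def Eset : Finset (Finset (Fin 3) × Finset (Fin 3)) :=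
  {({0},{0}), ({0},{0,1}), ({0},{1}), ({0,1},{0,1}), ({0,1},{0,1,2}), ({0,1},{0,2}),
   ({0,1},{1}), ({0,1},{1,2}), ({0,1,2},{0,1}), ({0,1,2},{0,1,2}), ({0,1,2},{0,2}),
   ({0,1,2},{1,2}), ({0,2},{0}), ({0,2},{0,1}), ({0,2},{0,1,2}), ({0,2},{0,2}),
   ({0,2},{1,2}), ({1},{1}), ({1},{1,2}), ({1},{2}), ({1,2},{0,1}), ({1,2},{0,1,2}),
   ({1,2},{0,2}), ({1,2},{1,2}), ({1,2},{2}), ({2},{0}), ({2},{0,2}), ({2},{2})}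

set_option maxRecDepth 4000 in
lemma Eset_closed : ∀ p ∈ Eset, ∀ q ∈ Eset, (p.1 ∪ q.1, p.2 ∪ q.2) ∈ Eset := by decide

lemma semEdge_mem {a b : F3} (h : SemEdge a b) : (a.1, b.1) ∈ Eset := by
  induction h with
  | xx => decide
  | xy => decide
  | yy => decide
  | yz => decide
  | zz => decide
  | zx => decide
  | join h1 h2 ih1 ih2 => exact Eset_closed _ ih1 _ ih2

lemma sym_from_x : ∀ s : Finset (Fin 3), (({0}, s) ∈ Eset) → ((s, {0}) ∈ Eset) → s = {0} := by
  decide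

/-- In the digraph `(F3, SemEdge)` — the digraph freely generated by the reflexive
3-cycle on `{x, y, z}` in the variety of semilattices — there is no symmetric path
from `{x}` to `{z}`. -/
theorem no_symmetric_path_genX_genZ :
    ¬ Relation.ReflTransGen (fun u v : F3 => SemEdge u v ∧ SemEdge v u) genX genZ := by
  intro h
  have key : ∀ v : F3,
      Relation.ReflTransGen (fun u v : F3 => SemEdge u v ∧ SemEdge v u) genX v →
      v = genX := by
    intro v hv
    induction hv with
    | refl => rfl
    | tail _ hstep ih =>
      rename_i b c _
      subst ih
      have h1 := semEdge_mem hstep.1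
      have h2 := semEdge_mem hstep.2
      have : c.1 = {0} := sym_from_x c.1 h1 h2
      exact Subtype.ext this
  have := key genZ h
  have : (genZ.1 : Finset (Fin 3)) = genX.1 := congrArg Subtype.val this
  exact absurd this (by decide)

end DigraphHM14
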